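/- Let F₁, F₂ : ℝⁿ → ℝ be differentiable, R : ℝⁿ → ℝ convex, G₁ = F₁ + R, G₂ = F₂ + R, and β > 0. Suppose: G₂ attains its infimum G₂* on a nonempty set of minimizers X₂*, satisfies the proximal PL condition with constant μ > 0 at parameter β ((1/2) D_R(F₂; x, β) ≥ μ(G₂(x) − G₂*) for all x), and satisfies the quadratic growth condition (ξ/2)·dist(x, X₂*)² ≤ G₂(x) − G₂* for all x, for some ξ > 0; G₁ attains its infimum at some x₁* ∈ ℝⁿ; and ‖∇F₂(x) − ∇F₁(x)‖ ≤ J for all x. Then dist(x₁*, X₂*)² ≤ J²/(ξμ). -/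

import Mathlib

open MeasureTheory
open scoped RealInnerProductSpace BigOperators

/-- The forward-backward envelope quantity
`D_R(F; x, δ) = -2δ · inf_y { ⟪∇F(x), y - x⟫ + (δ/2)‖y - x‖² + R(y) - R(x) }`
used in the proximal Polyak–Łojasiewicz condition. -/
noncomputable def DR {n : ℕ} (F R : EuclideanSpace ℝ (Fin n) → ℝ)
    (x : EuclideanSpace ℝ (Fin n)) (δ : ℝ) : ℝ :=
  -2 * δ * (⨅ y : EuclideanSpace ℝ (Fin n),
    (⟪gradient F x, y - x⟫ + δ / 2 * ‖y - x‖ ^ 2 + R y - R x))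

/-- First order optimality: if `x` minimizes `F + R` with `F` differentiable and
`R` convex, then `0 ≤ ⟪∇F x, y - x⟫ + R y - R x` for all `y`. -/
lemma first_order_opt {n : ℕ} (F R : EuclideanSpace ℝ (Fin n) → ℝ)
    (hF : Differentiable ℝ F) (hR : ConvexOn ℝ Set.univ R)
    (x : EuclideanSpace ℝ (Fin n)) (hmin : ∀ z, F x + R x ≤ F z + R z)
    (y : EuclideanSpace ℝ (Fin n)) :
    0 ≤ ⟪gradient F x, y - x⟫ + R y - R x := by
  set v := y - x with hv
  -- the function t ↦ F (x + t • v) has derivative ⟪∇F x, v⟫ at 0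
  have hline : HasDerivAt (fun t : ℝ => x + t • v) v 0 := by
    simpa using ((hasDerivAt_id (0:ℝ)).smul_const v).const_add x
  have hcomp : HasDerivAt (fun t : ℝ => F (x + t • v)) (fderiv ℝ F x v) 0 := by
    have hx0 : HasFDerivAt F (fderiv ℝ F x) (x + (0:ℝ) • v) := by
      simpa using (hF x).hasFDerivAt
    exact hx0.comp_hasDerivAt 0 hline
  have hgrad_inner : ⟪gradient F x, v⟫ = fderiv ℝ F x v := by
    rw [gradient]
    exact InnerProductSpace.toDual_symm_apply
  -- slope bound: for t ∈ (0,1], (F(x+tv) - F x)/t ≥ -(R y - R x)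
  have hslope : ∀ t : ℝ, t ∈ Set.Ioc (0:ℝ) 1 →
      -(R y - R x) ≤ (F (x + t • v) - F x) / t := by
    intro t ht
    have ht0 : 0 < t := ht.1
    have hconv : R (x + t • v) ≤ (1 - t) * R x + t * R y := by
      have := hR.2 (Set.mem_univ x) (Set.mem_univ y)
        (by linarith [ht.2] : (0:ℝ) ≤ 1 - t) (le_of_lt ht0) (by ring)
      have heq : (1 - t) • x + t • y = x + t • v := by
        rw [hv]; module
      rw [heq] at this
      simpa [smul_eq_mul] using this
    have hmin' := hmin (x + t • v)
    rw [le_div_iff₀ ht0]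
    nlinarith
  -- pass to the limit
  have htend : Filter.Tendsto (fun t : ℝ => (F (x + t • v) - F x) / t)
      (nhdsWithin 0 (Set.Ioi (0:ℝ))) (nhds (fderiv ℝ F x v)) := by
    have h := hasDerivAt_iff_tendsto_slope.mp hcomp
    have h2 := h.mono_left (nhdsWithin_mono _ (fun t ht => ne_of_gt ht))
    refine h2.congr fun t => ?_
    simp [slope_def_field, div_eq_inv_mul]
  have hlim : -(R y - R x) ≤ fderiv ℝ F x v := by
    refine ge_of_tendsto htend ?_
    filter_upwards [Ioc_mem_nhdsGT (by norm_num : (0:ℝ) < 1)]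
      with t ht using hslope t ht
  rw [hgrad_inner]
  linarith

theorem stmt11 {n : ℕ} (β μ ξ J : ℝ)
    (hβ : 0 < β) (hμ : 0 < μ) (hξ : 0 < ξ) (hJ : 0 ≤ J)
    (F₁ F₂ R : EuclideanSpace ℝ (Fin n) → ℝ)
    (hF₁ : Differentiable ℝ F₁) (hF₂ : Differentiable ℝ F₂)
    (hR : ConvexOn ℝ Set.univ R)
    (G2s : ℝ) (hG2_lb : ∀ x, G2s ≤ F₂ x + R x) (hG2_att : ∃ x, F₂ x + R x = G2s)
    (hproxPL : ∀ x, μ * ((F₂ x + R x) - G2s) ≤ (1 / 2) * DR F₂ R x β)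
    (hQG : ∀ x, ξ / 2 * (Metric.infDist x {y | F₂ y + R y = G2s}) ^ 2
      ≤ (F₂ x + R x) - G2s)
    (x1star : EuclideanSpace ℝ (Fin n))
    (hG1_att : ∀ x, F₁ x1star + R x1star ≤ F₁ x + R x)
    (hgrad : ∀ x, ‖gradient F₂ x - gradient F₁ x‖ ≤ J) :
    (Metric.infDist x1star {y | F₂ y + R y = G2s}) ^ 2 ≤ J ^ 2 / (ξ * μ) := by
  set x := x1star
  -- lower bound on each term of the infimum in DR F₂ R x β
  have hterm : ∀ y : EuclideanSpace ℝ (Fin n),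
      -(J ^ 2 / (2 * β)) ≤ ⟪gradient F₂ x, y - x⟫ + β / 2 * ‖y - x‖ ^ 2 + R y - R x := by
    intro y
    have h1 := first_order_opt F₁ R hF₁ hR x hG1_att y
    have habs : |⟪gradient F₂ x - gradient F₁ x, y - x⟫| ≤ J * ‖y - x‖ :=
      le_trans (abs_real_inner_le_norm _ _)
        (mul_le_mul_of_nonneg_right (hgrad x) (norm_nonneg _))
    have h2 : -(J * ‖y - x‖) ≤ ⟪gradient F₂ x - gradient F₁ x, y - x⟫ :=
      (abs_le.mp habs).1
    have h3 : ⟪gradient F₂ x, y - x⟫ =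
        ⟪gradient F₂ x - gradient F₁ x, y - x⟫ + ⟪gradient F₁ x, y - x⟫ := by
      rw [← inner_add_left]; congr 1; abel
    have h4 : -(J ^ 2 / (2 * β)) ≤ β / 2 * ‖y - x‖ ^ 2 - J * ‖y - x‖ := by
      have hsq : 0 ≤ (β * ‖y - x‖ - J) ^ 2 := sq_nonneg _
      have hc : J ^ 2 / (2 * β) * (2 * β) = J ^ 2 := by field_simp
      nlinarith [hsq, hc, hβ]
    linarith
  have hinf : -(J ^ 2 / (2 * β)) ≤ (⨅ y : EuclideanSpace ℝ (Fin n),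
      (⟪gradient F₂ x, y - x⟫ + β / 2 * ‖y - x‖ ^ 2 + R y - R x)) :=
    le_ciInf hterm
  have hDR : DR F₂ R x β ≤ J ^ 2 := by
    unfold DR
    have hmul := mul_le_mul_of_nonneg_left hinf (by positivity : (0:ℝ) ≤ 2 * β)
    have heq : (2 * β) * (-(J ^ 2 / (2 * β))) = -J ^ 2 := by field_simp
    linarith
  have hPL := hproxPL x
  have hQGx := hQG x
  have hd : 0 ≤ Metric.infDist x {y | F₂ y + R y = G2s} := Metric.infDist_nonneg
  rw [le_div_iff₀ (by positivity : (0:ℝ) < ξ * μ)]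
  nlinarith [hQGx, hPL, hDR, mul_le_mul_of_nonneg_left hQGx hμ.le]
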